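/- For any target policy π, behavior policy μ, λ ∈ [0,1], and Q-function Q, the following identity holds: R^π_λ Q − Q^π = γ ∑_{t≥0} (λγ)^t (P^μ)^t [ (1−λ) P^π + λ (P^π − P^μ) ] (Q − Q^π), where R^π_λ Q := Q + ∑_{t≥0} (λγ)^t (P^μ)^t (T^π Q − Q). -/

import Mathlib

open scoped BigOperators

noncomputable section

/-- The operator `P^π` on Q-functions. -/
def Pop {X A : Type*} [Fintype X] [Fintype A] (P : X → A → X → ℝ) (π : X → A → ℝ)
    (Q : X × A → ℝ) : X × A → ℝ :=
  fun p => ∑ y : X, ∑ b : A, P p.1 p.2 y * π y b * Q (y, b)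

/-- The Bellman operator `T^π Q = r + γ P^π Q`. -/
def Tpol {X A : Type*} [Fintype X] [Fintype A] (P : X → A → X → ℝ) (π : X → A → ℝ)
    (γ : ℝ) (r : X × A → ℝ) (Q : X × A → ℝ) : X × A → ℝ :=
  r + γ • Pop P π Q

/-- The off-policy corrected λ-operator
`R^π_λ Q = Q + ∑_{t≥0} (λγ)^t (P^μ)^t (T^π Q − Q)`. -/
def Rpi {X A : Type*} [Fintype X] [Fintype A] (P : X → A → X → ℝ) (π μ : X → A → ℝ)
    (γ lam : ℝ) (r : X × A → ℝ) (Q : X × A → ℝ) : X × A → ℝ :=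
  Q + ∑' t : ℕ, (lam * γ) ^ t • (Pop P μ)^[t] (Tpol P π γ r Q - Q)

section Aux
variable {X A : Type*} [Fintype X] [Fintype A]

lemma Pop_sub (P : X → A → X → ℝ) (π : X → A → ℝ) (f g : X × A → ℝ) :
    Pop P π (f - g) = Pop P π f - Pop P π g := by
  funext p
  simp only [Pop, Pi.sub_apply, mul_sub, Finset.sum_sub_distrib]

lemma Pop_smul (P : X → A → X → ℝ) (π : X → A → ℝ) (c : ℝ) (f : X × A → ℝ) :
    Pop P π (c • f) = c • Pop P π f := by
  funext p
  simp only [Pop, Pi.smul_apply, smul_eq_mul, Finset.mul_sum]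
  refine Finset.sum_congr rfl fun y _ => Finset.sum_congr rfl fun b _ => by ring

lemma iter_sub (P : X → A → X → ℝ) (μ : X → A → ℝ) (t : ℕ) (f g : X × A → ℝ) :
    (Pop P μ)^[t] (f - g) = (Pop P μ)^[t] f - (Pop P μ)^[t] g := by
  induction t generalizing f g with
  | zero => simp
  | succ n ih => simp [Function.iterate_succ_apply, Pop_sub, ih]

lemma iter_smul (P : X → A → X → ℝ) (μ : X → A → ℝ) (t : ℕ) (c : ℝ) (f : X × A → ℝ) :
    (Pop P μ)^[t] (c • f) = c • (Pop P μ)^[t] f := by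
  induction t generalizing f with
  | zero => simp
  | succ n ih => simp [Function.iterate_succ_apply, Pop_smul, ih]

lemma Pop_norm_le [Nonempty X] [Nonempty A] (P : X → A → X → ℝ)
    (hP0 : ∀ x a y, 0 ≤ P x a y) (hP1 : ∀ x a, ∑ y : X, P x a y = 1)
    (μ : X → A → ℝ) (hμ0 : ∀ x a, 0 ≤ μ x a) (hμ1 : ∀ x, ∑ a : A, μ x a = 1)
    (f : X × A → ℝ) : ‖Pop P μ f‖ ≤ ‖f‖ := by
  rw [pi_norm_le_iff_of_nonneg (norm_nonneg f)]
  intro p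
  have h1 : ‖Pop P μ f p‖ ≤ ∑ y : X, ∑ b : A, P p.1 p.2 y * μ y b * ‖f (y, b)‖ := by
    refine (norm_sum_le _ _).trans (Finset.sum_le_sum fun y _ => ?_)
    refine (norm_sum_le _ _).trans (Finset.sum_le_sum fun b _ => ?_)
    rw [norm_mul, norm_mul, Real.norm_of_nonneg (hP0 _ _ _), Real.norm_of_nonneg (hμ0 _ _)]
  refine h1.trans ?_
  have h2 : ∑ y : X, ∑ b : A, P p.1 p.2 y * μ y b * ‖f (y, b)‖
      ≤ ∑ y : X, ∑ b : A, P p.1 p.2 y * μ y b * ‖f‖ := by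
    refine Finset.sum_le_sum fun y _ => Finset.sum_le_sum fun b _ => ?_
    exact mul_le_mul_of_nonneg_left (norm_le_pi_norm f (y, b))
      (mul_nonneg (hP0 _ _ _) (hμ0 _ _))
  refine h2.trans ?_
  have : ∑ y : X, ∑ b : A, P p.1 p.2 y * μ y b * ‖f‖
      = (∑ y : X, P p.1 p.2 y * (∑ b : A, μ y b)) * ‖f‖ := by
    simp only [Finset.sum_mul, Finset.mul_sum, mul_assoc]
  rw [this]
  simp only [hμ1, mul_one, hP1, one_mul, le_refl]

lemma iter_norm_le [Nonempty X] [Nonempty A] (P : X → A → X → ℝ)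
    (hP0 : ∀ x a y, 0 ≤ P x a y) (hP1 : ∀ x a, ∑ y : X, P x a y = 1)
    (μ : X → A → ℝ) (hμ0 : ∀ x a, 0 ≤ μ x a) (hμ1 : ∀ x, ∑ a : A, μ x a = 1)
    (t : ℕ) (f : X × A → ℝ) : ‖(Pop P μ)^[t] f‖ ≤ ‖f‖ := by
  induction t with
  | zero => simp
  | succ n ih =>
    rw [Function.iterate_succ_apply']
    exact (Pop_norm_le P hP0 hP1 μ hμ0 hμ1 _).trans ih

lemma summable_iter [Nonempty X] [Nonempty A] (P : X → A → X → ℝ)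
    (hP0 : ∀ x a y, 0 ≤ P x a y) (hP1 : ∀ x a, ∑ y : X, P x a y = 1)
    (μ : X → A → ℝ) (hμ0 : ∀ x a, 0 ≤ μ x a) (hμ1 : ∀ x, ∑ a : A, μ x a = 1)
    (c : ℝ) (hc0 : 0 ≤ c) (hc1 : c < 1) (f : X × A → ℝ) :
    Summable (fun t : ℕ => c ^ t • (Pop P μ)^[t] f) := by
  refine Summable.of_norm_bounded (g := fun t => c ^ t * ‖f‖) ?_ fun t => ?_
  · exact (summable_geometric_of_lt_one hc0 hc1).mul_right _
  · rw [norm_smul, Real.norm_of_nonneg (pow_nonneg hc0 t)]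
    exact mul_le_mul_of_nonneg_left (iter_norm_le P hP0 hP1 μ hμ0 hμ1 t f)
      (pow_nonneg hc0 t)

end Aux


/-- the error-propagation identity
`R^π_λ Q − Q^π = γ ∑_{t≥0} (λγ)^t (P^μ)^t [ (1−λ) P^π + λ (P^π − P^μ) ] (Q − Q^π)`. -/
theorem stmt5 {X A : Type*} [Fintype X] [Fintype A] [Nonempty X] [Nonempty A]
    (P : X → A → X → ℝ)
    (hP0 : ∀ x a y, 0 ≤ P x a y) (hP1 : ∀ x a, ∑ y : X, P x a y = 1)
    (π μ : X → A → ℝ)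
    (hπ0 : ∀ x a, 0 ≤ π x a) (hπ1 : ∀ x, ∑ a : A, π x a = 1)
    (hμ0 : ∀ x a, 0 ≤ μ x a) (hμ1 : ∀ x, ∑ a : A, μ x a = 1)
    (γ : ℝ) (hγ0 : 0 ≤ γ) (hγ1 : γ < 1)
    (lam : ℝ) (hl0 : 0 ≤ lam) (hl1 : lam ≤ 1)
    (r : X × A → ℝ) (Qπ : X × A → ℝ)
    (hQπ : Qπ = r + γ • Pop P π Qπ)
    (Q : X × A → ℝ) :
    Rpi P π μ γ lam r Q - Qπ =
      γ • ∑' t : ℕ, (lam * γ) ^ t •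
        (Pop P μ)^[t]
          ((1 - lam) • Pop P π (Q - Qπ) +
            lam • (Pop P π (Q - Qπ) - Pop P μ (Q - Qπ))) := by
  have hc0 : 0 ≤ lam * γ := mul_nonneg hl0 hγ0
  have hc1 : lam * γ < 1 := by nlinarith
  set c := lam * γ with hc
  set Δ : X × A → ℝ := Q - Qπ with hΔ
  have hT : Tpol P π γ r Q - Q = γ • Pop P π Δ - Δ := by
    have hr : r = Qπ - γ • Pop P π Qπ := by rw [eq_sub_iff_add_eq]; exact hQπ.symm
    simp only [Tpol, hΔ, Pop_sub, smul_sub]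
    rw [hr]; abel
  have hbr : (1 - lam) • Pop P π Δ + lam • (Pop P π Δ - Pop P μ Δ)
      = Pop P π Δ - lam • Pop P μ Δ := by module
  have hSA := summable_iter P hP0 hP1 μ hμ0 hμ1 c hc0 hc1 (Pop P π Δ)
  have hSB := summable_iter P hP0 hP1 μ hμ0 hμ1 c hc0 hc1 (Pop P μ Δ)
  have hSD := summable_iter P hP0 hP1 μ hμ0 hμ1 c hc0 hc1 Δ
  have hL : (∑' t : ℕ, c ^ t • (Pop P μ)^[t] (Tpol P π γ r Q - Q))
      = γ • (∑' t : ℕ, c ^ t • (Pop P μ)^[t] (Pop P π Δ))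
        - (∑' t : ℕ, c ^ t • (Pop P μ)^[t] Δ) := by
    have h1 : (fun t : ℕ => c ^ t • (Pop P μ)^[t] (Tpol P π γ r Q - Q))
        = fun t : ℕ => γ • (c ^ t • (Pop P μ)^[t] (Pop P π Δ))
            - c ^ t • (Pop P μ)^[t] Δ := by
      funext t
      rw [hT, iter_sub, iter_smul, smul_sub, smul_comm]
    rw [h1, Summable.tsum_sub (hSA.const_smul γ) hSD, Summable.tsum_const_smul γ hSA]
  have hR : (∑' t : ℕ, c ^ t • (Pop P μ)^[t]
        ((1 - lam) • Pop P π Δ + lam • (Pop P π Δ - Pop P μ Δ)))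
      = (∑' t : ℕ, c ^ t • (Pop P μ)^[t] (Pop P π Δ))
        - lam • (∑' t : ℕ, c ^ t • (Pop P μ)^[t] (Pop P μ Δ)) := by
    have h1 : (fun t : ℕ => c ^ t • (Pop P μ)^[t]
          ((1 - lam) • Pop P π Δ + lam • (Pop P π Δ - Pop P μ Δ)))
        = fun t : ℕ => c ^ t • (Pop P μ)^[t] (Pop P π Δ)
            - lam • (c ^ t • (Pop P μ)^[t] (Pop P μ Δ)) := by
      funext t
      rw [hbr, iter_sub, iter_smul, smul_sub, smul_comm]
    rw [h1, Summable.tsum_sub hSA (hSB.const_smul lam), Summable.tsum_const_smul lam hSB]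
  have hshift : (∑' t : ℕ, c ^ t • (Pop P μ)^[t] Δ)
      = Δ + c • (∑' t : ℕ, c ^ t • (Pop P μ)^[t] (Pop P μ Δ)) := by
    rw [Summable.tsum_eq_zero_add hSD]
    simp only [pow_zero, one_smul, Function.iterate_zero_apply]
    congr 1
    rw [← Summable.tsum_const_smul c hSB]
    refine tsum_congr fun t => ?_
    rw [Function.iterate_succ_apply, smul_smul, ← pow_succ']
  rw [Rpi, hL, hR, hshift]
  rw [hΔ, hc]
  module
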